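/- Let G be a countable nondiscrete Boolean topological group containing a sequence (G_i)_{i ∈ ℕ} of open subgroups whose intersection ⋂_{i ∈ ℕ} G_i is the trivial subgroup {0}. Then G has a basis e : ℕ → G (every element of G is the sum of the e_k over some finite set of indices, and the sum of the e_k over any nonempty finite set of indices is nonzero) such that for every n ∈ ℕ the subgroup of G generated by {e_k : k ≥ n} is open in G. Consequently, the isomorphism of G onto the direct sum of countably many copies of ℤ/2 taking this basis to the canonical basis is continuous with respect to the product topology on the direct sum. -/

import Mathlib

/-- A countable nondiscrete Boolean topological group with a sequence of open
subgroups intersecting in `{0}` has a basis `e : ℕ → G` such that every subgroup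
generated by a tail `{e k : k ≥ n}` is open; consequently, the isomorphism of
`G` onto the direct sum `⨁_ℕ ℤ/2` taking this basis to the canonical basis is
continuous with respect to the product topology on the direct sum. -/
theorem stmt13 {G : Type*} [AddCommGroup G] [TopologicalSpace G] [IsTopologicalAddGroup G]
    [Countable G] (hnd : ¬ DiscreteTopology G) (hbool : ∀ g : G, g + g = 0)
    (Gi : ℕ → AddSubgroup G) (hopen : ∀ i, IsOpen (Gi i : Set G))
    (hinter : ⋂ i, (Gi i : Set G) = {0}) :
    ∃ e : ℕ → G,
      (∀ g : G, ∃ s : Finset ℕ, g = ∑ k ∈ s, e k) ∧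
      (∀ s : Finset ℕ, s.Nonempty → ∑ k ∈ s, e k ≠ 0) ∧
      (∀ n : ℕ, IsOpen (AddSubgroup.closure (e '' {k | n ≤ k}) : Set G)) ∧
      ∃ c : G →+ (ℕ →₀ ZMod 2), Function.Bijective c ∧
        (∀ k : ℕ, c (e k) = Finsupp.single k 1) ∧
        @Continuous G (ℕ → ZMod 2) _
          (@Pi.topologicalSpace ℕ (fun _ => ZMod 2) (fun _ => ⊥))
          (fun g => (c g : ℕ → ZMod 2)) := by
  classical
  haveI : Fact (Nat.Prime 2) := ⟨Nat.prime_two⟩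
  letI : Module (ZMod 2) G := AddCommGroup.zmodModule (n := 2) (fun x => by
    rw [two_nsmul]; exact hbool x)
  have hK : ∀ c : ZMod 2, c = 0 ∨ c = 1 := by
    intro c; fin_cases c
    · exact Or.inl rfl
    · exact Or.inr rfl
  haveI : Nonempty G := ⟨0⟩
  obtain ⟨gs, hgs⟩ := exists_surjective_nat G
  -- Step lemma: split off a one-dimensional piece from an open submodule.
  have hstep : ∀ U : Submodule (ZMod 2) G, IsOpen (U : Set G) → ∀ u ∈ U,
      ∃ x : G, ∃ U' : Submodule (ZMod 2) G, x ∈ U ∧ x ≠ 0 ∧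
        u ∈ Submodule.span (ZMod 2) {x} ∧
        IsOpen (U' : Set G) ∧ U' ≤ U ∧ Disjoint (Submodule.span (ZMod 2) {x}) U' ∧
        Submodule.span (ZMod 2) {x} ⊔ U' = U := by
    intro U hUo u hu
    obtain ⟨x, hxU, hx0, hux⟩ : ∃ x, x ∈ U ∧ x ≠ 0 ∧ u ∈ Submodule.span (ZMod 2) {x} := by
      by_cases hu0 : u = 0
      · by_contra hc
        push_neg at hc
        have hUbot : (U : Set G) = {0} := by
          ext y
          simp only [Set.mem_singleton_iff, SetLike.mem_coe]
          refine ⟨fun hy => ?_, fun hy => hy ▸ U.zero_mem⟩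
          by_contra hy0
          exact hc y hy hy0 (by rw [hu0]; exact Submodule.zero_mem _)
        exact hnd (discreteTopology_iff_isOpen_singleton_zero.mpr (hUbot ▸ hUo))
      · exact ⟨u, hu, hu0, Submodule.mem_span_singleton_self u⟩
    obtain ⟨i, hxi⟩ : ∃ i, x ∉ Gi i := by
      by_contra hc
      push_neg at hc
      have : x ∈ ⋂ i, (Gi i : Set G) := Set.mem_iInter.mpr fun i => hc i
      rw [hinter] at this
      exact hx0 this
    set W : Submodule (ZMod 2) G := U ⊓ AddSubgroup.toZModSubmodule 2 (Gi i) with hWdef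
    have hWo : IsOpen (W : Set G) := by
      have : (W : Set G) = (U : Set G) ∩ (Gi i : Set G) := rfl
      rw [this]; exact hUo.inter (hopen i)
    have hWU : W ≤ U := inf_le_left
    set x' : U := ⟨x, hxU⟩ with hx'def
    set W' : Submodule (ZMod 2) U := W.comap U.subtype with hW'def
    have hx'W' : x' ∉ W' := by
      intro h
      exact hxi (Submodule.mem_inf.mp h).2
    have hqx : W'.mkQ x' ≠ 0 := by
      rw [Submodule.mkQ_apply, Ne, Submodule.Quotient.mk_eq_zero]
      exact hx'W'
    obtain ⟨C, hC⟩ := Submodule.exists_isCompl (Submodule.span (ZMod 2) {W'.mkQ x'})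
    set M' : Submodule (ZMod 2) U := C.comap W'.mkQ with hM'def
    have hW'M' : W' ≤ M' := by
      intro y hy
      have h0 : W'.mkQ y = 0 := by
        rw [Submodule.mkQ_apply, Submodule.Quotient.mk_eq_zero]; exact hy
      show W'.mkQ y ∈ C
      rw [h0]; exact C.zero_mem
    set M : Submodule (ZMod 2) G := M'.map U.subtype with hMdef
    have hMU : M ≤ U := Submodule.map_subtype_le _ _
    have hWM : W ≤ M := by
      intro w hw
      exact Submodule.mem_map.mpr ⟨⟨w, hWU hw⟩, hW'M' hw, rfl⟩
    have hxM : x ∉ M := by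
      rintro ⟨y, hyM', hyx⟩
      have hy : y = x' := Subtype.ext hyx
      rw [hy] at hyM'
      have h2 : W'.mkQ x' ∈ Submodule.span (ZMod 2) {W'.mkQ x'} :=
        Submodule.mem_span_singleton_self _
      exact hqx (Submodule.disjoint_def.mp hC.disjoint _ h2 hyM')
    have hMo : IsOpen (M : Set G) := Submodule.isOpen_mono hWM hWo
    have hsupM : Submodule.span (ZMod 2) {x} ⊔ M = U := by
      apply le_antisymm
      · exact sup_le (Submodule.span_le.mpr (by simpa using hxU)) hMU
      · intro g hgU
        have hq : W'.mkQ ⟨g, hgU⟩ ∈ Submodule.span (ZMod 2) {W'.mkQ x'} ⊔ C := by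
          rw [hC.sup_eq_top]; exact Submodule.mem_top
        obtain ⟨y, hy, z, hz, hyz⟩ := Submodule.mem_sup.mp hq
        obtain ⟨c, rfl⟩ := Submodule.mem_span_singleton.mp hy
        have hmem : ((⟨g, hgU⟩ : U) - c • x') ∈ M' := by
          show W'.mkQ ((⟨g, hgU⟩ : U) - c • x') ∈ C
          have : W'.mkQ ((⟨g, hgU⟩ : U) - c • x') = z := by
            rw [map_sub, map_smul, ← hyz]; abel
          rw [this]; exact hz
        refine Submodule.mem_sup.mpr ⟨c • x,
          Submodule.smul_mem _ c (Submodule.mem_span_singleton_self x),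
          g - c • x, Submodule.mem_map.mpr ⟨(⟨g, hgU⟩ : U) - c • x', hmem, rfl⟩, by abel⟩
    have hdisjM : Disjoint (Submodule.span (ZMod 2) {x}) M := by
      rw [Submodule.disjoint_def]
      intro y hy hyM
      obtain ⟨c, rfl⟩ := Submodule.mem_span_singleton.mp hy
      rcases hK c with rfl | rfl
      · simp
      · rw [one_smul] at hyM ⊢
        exact absurd hyM hxM
    exact ⟨x, M, hxU, hx0, hux, hMo, hMU, hdisjM, hsupM⟩
  -- the invariant and one construction step
  let Inv : List G × Submodule (ZMod 2) G → Prop := fun p =>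
    IsOpen (p.2 : Set G) ∧ Disjoint (Submodule.span (ZMod 2) {a | a ∈ p.1}) p.2 ∧
      Submodule.span (ZMod 2) {a | a ∈ p.1} ⊔ p.2 = ⊤
  have key : ∀ (n : ℕ) (p : List G × Submodule (ZMod 2) G), Inv p →
      ∃ q : List G × Submodule (ZMod 2) G, Inv q ∧ ∃ x : G,
        q.1 = p.1 ++ [x] ∧ x ∈ p.2 ∧ x ≠ 0 ∧ q.2 ≤ p.2 ∧
        gs n ∈ Submodule.span (ZMod 2) {a | a ∈ q.1} := by
    rintro n ⟨E, U⟩ ⟨hUo, hdisj, hsup⟩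
    have hgson : gs n ∈ Submodule.span (ZMod 2) {a | a ∈ E} ⊔ U := by
      rw [hsup]; exact Submodule.mem_top
    obtain ⟨a, ha, u, hu, hau⟩ := Submodule.mem_sup.mp hgson
    obtain ⟨x, U', hxU, hx0, hux, hU'o, hU'U, hdisj', hsup'⟩ := hstep U hUo u hu
    have hset : {a : G | a ∈ E ++ [x]} = {a : G | a ∈ E} ∪ {x} := by
      ext y; simp [List.mem_append, or_comm]
    have hspan' : Submodule.span (ZMod 2) {a : G | a ∈ E ++ [x]}
        = Submodule.span (ZMod 2) {a : G | a ∈ E} ⊔ Submodule.span (ZMod 2) {x} := by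
      rw [hset, Submodule.span_union]
    refine ⟨(E ++ [x], U'), ⟨hU'o, ?_, ?_⟩, x, rfl, hxU, hx0, hU'U, ?_⟩
    · show Disjoint (Submodule.span (ZMod 2) {a : G | a ∈ E ++ [x]}) U'
      rw [hspan', Submodule.disjoint_def]
      intro y hy hyU'
      obtain ⟨a', ha', b', hb', hab⟩ := Submodule.mem_sup.mp hy
      have hb'U : b' ∈ U := (Submodule.span_le.mpr (by simpa using hxU)) hb'
      have ha'0 : a' = 0 := by
        refine Submodule.disjoint_def.mp hdisj a' ha' ?_
        have : a' = y - b' := by rw [← hab]; abel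
        rw [this]; exact sub_mem (hU'U hyU') hb'U
      have hyb : y = b' := by rw [← hab, ha'0, zero_add]
      rw [hyb]
      exact Submodule.disjoint_def.mp hdisj' b' hb' (hyb ▸ hyU')
    · show Submodule.span (ZMod 2) {a : G | a ∈ E ++ [x]} ⊔ U' = ⊤
      rw [hspan', sup_assoc, hsup']; exact hsup
    · show gs n ∈ Submodule.span (ZMod 2) {a : G | a ∈ E ++ [x]}
      rw [hspan', ← hau]
      exact add_mem (Submodule.mem_sup_left ha) (Submodule.mem_sup_right hux)
  -- base case of the recursion
  have hbase : Inv (([] : List G), (⊤ : Submodule (ZMod 2) G)) := by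
    have h0 : {a : G | a ∈ ([] : List G)} = (∅ : Set G) := by simp
    refine ⟨?_, ?_, ?_⟩
    · rw [Submodule.top_coe]; exact isOpen_univ
    · rw [h0, Submodule.span_empty]; exact disjoint_bot_left
    · rw [h0, Submodule.span_empty, bot_sup_eq]
  -- the recursive construction
  let f : ℕ → {p : List G × Submodule (ZMod 2) G // Inv p} := fun n =>
    Nat.rec ⟨(([] : List G), ⊤), hbase⟩
      (fun n p => ⟨Classical.choose (key n p.1 p.2),
        (Classical.choose_spec (key n p.1 p.2)).1⟩) n
  have hf : ∀ n : ℕ, ∃ x : G, (f (n+1)).1.1 = (f n).1.1 ++ [x] ∧ x ∈ (f n).1.2 ∧ x ≠ 0 ∧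
      (f (n+1)).1.2 ≤ (f n).1.2 ∧ gs n ∈ Submodule.span (ZMod 2) {a | a ∈ (f (n+1)).1.1} :=
    fun n => (Classical.choose_spec (key n (f n).1 (f n).2)).2
  let e : ℕ → G := fun n => Classical.choose (hf n)
  have hlist : ∀ n, (f (n+1)).1.1 = (f n).1.1 ++ [e n] := fun n => (Classical.choose_spec (hf n)).1
  have hemem : ∀ n, e n ∈ (f n).1.2 := fun n => (Classical.choose_spec (hf n)).2.1
  have hene : ∀ n, e n ≠ 0 := fun n => (Classical.choose_spec (hf n)).2.2.1
  have hUmono' : ∀ n, (f (n+1)).1.2 ≤ (f n).1.2 :=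
    fun n => (Classical.choose_spec (hf n)).2.2.2.1
  have hgsmem : ∀ n, gs n ∈ Submodule.span (ZMod 2) {a | a ∈ (f (n+1)).1.1} :=
    fun n => (Classical.choose_spec (hf n)).2.2.2.2
  have hUmono : ∀ m n, m ≤ n → (f n).1.2 ≤ (f m).1.2 := by
    intro m n h
    induction n, h using Nat.le_induction with
    | base => exact le_rfl
    | succ n hmn ih => exact (hUmono' n).trans ih
  have hE : ∀ n, {a : G | a ∈ (f n).1.1} = e '' Set.Iio n := by
    intro n
    induction n with
    | zero =>
      rw [show (f 0).1.1 = ([] : List G) from rfl]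
      ext y; simp
    | succ n ih =>
      rw [hlist n]
      ext y
      have hy := Set.ext_iff.mp ih y
      simp only [Set.mem_setOf_eq, Set.mem_image, Set.mem_Iio] at hy ⊢
      simp only [List.mem_append, List.mem_singleton]
      constructor
      · rintro (h | rfl)
        · obtain ⟨k, hk, rfl⟩ := hy.mp h
          exact ⟨k, Nat.lt_succ_of_lt hk, rfl⟩
        · exact ⟨n, Nat.lt_succ_self n, rfl⟩
      · rintro ⟨k, hk, rfl⟩
        rcases Nat.lt_succ_iff_lt_or_eq.mp hk with h | rfl
        · exact Or.inl (hy.mpr ⟨k, h, rfl⟩)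
        · exact Or.inr rfl
  have hdisjE : ∀ n, Disjoint (Submodule.span (ZMod 2) (e '' Set.Iio n)) (f n).1.2 := by
    intro n
    rw [← hE n]; exact (f n).2.2.1
  have hg2 : ∀ g : G, ∃ N, g ∈ Submodule.span (ZMod 2) (e '' Set.Iio N) := by
    intro g
    obtain ⟨n, rfl⟩ := hgs g
    exact ⟨n+1, by rw [← hE (n+1)]; exact hgsmem n⟩
  -- linear independence
  have hindep : LinearIndependent (ZMod 2) e := by
    rw [linearIndependent_iff']
    intro s gc hsum i hi
    by_contra hgi
    set t := s.filter (fun j => gc j ≠ 0) with ht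
    have hts : ∑ j ∈ t, gc j • e j = 0 := by
      have hsub : ∑ j ∈ t, gc j • e j = ∑ j ∈ s, gc j • e j := by
        refine Finset.sum_subset (ht ▸ Finset.filter_subset _ s) ?_
        intro x hxs hxt
        have h0 : gc x = 0 := by
          by_contra hne
          exact hxt (ht ▸ Finset.mem_filter.mpr ⟨hxs, hne⟩)
        rw [h0, zero_smul]
      rw [hsub]; exact hsum
    have hit : i ∈ t := Finset.mem_filter.mpr ⟨hi, hgi⟩
    have htne : t.Nonempty := ⟨i, hit⟩
    set m := t.max' htne with hm
    have hmt : m ∈ t := t.max'_mem htne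
    have hsum2 : gc m • e m + ∑ j ∈ t.erase m, gc j • e j = 0 :=
      (Finset.add_sum_erase t (fun j => gc j • e j) hmt).trans hts
    have hgm : gc m = 1 := (hK (gc m)).resolve_left (Finset.mem_filter.mp hmt).2
    have hrest : ∑ j ∈ t.erase m, gc j • e j ∈ Submodule.span (ZMod 2) (e '' Set.Iio m) := by
      apply Submodule.sum_mem
      intro j hj
      have hjm : j < m := lt_of_le_of_ne (t.le_max' j (Finset.mem_of_mem_erase hj))
        (Finset.ne_of_mem_erase hj)
      exact Submodule.smul_mem _ _ (Submodule.subset_span ⟨j, hjm, rfl⟩)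
    have hem : e m ∈ Submodule.span (ZMod 2) (e '' Set.Iio m) := by
      have h1 : e m = -∑ j ∈ t.erase m, gc j • e j := by
        rw [hgm, one_smul] at hsum2
        exact eq_neg_of_add_eq_zero_left hsum2
      rw [h1]; exact Submodule.neg_mem _ hrest
    exact hene m (Submodule.disjoint_def.mp (hdisjE m) (e m) hem (hemem m))
  have hspanning : ⊤ ≤ Submodule.span (ZMod 2) (Set.range e) := by
    intro g _
    obtain ⟨N, hN⟩ := hg2 g
    exact Submodule.span_mono (Set.image_subset_range e (Set.Iio N)) hN
  let b : Module.Basis ℕ (ZMod 2) G := Module.Basis.mk hindep hspanning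
  have hbk : ∀ k, b k = e k := fun k => Module.Basis.mk_apply hindep hspanning k
  -- tails contain the U's
  have htail : ∀ n, (f n).1.2 ≤ Submodule.span (ZMod 2) (e '' {k | n ≤ k}) := by
    intro n g hg
    obtain ⟨N0, hN0⟩ := hg2 g
    have hNn : g ∈ Submodule.span (ZMod 2) (e '' Set.Iio (max n N0)) :=
      Submodule.span_mono (Set.image_mono (f := e) (Set.Iio_subset_Iio (le_max_right n N0))) hN0
    have hsplit : Set.Iio (max n N0) = Set.Iio n ∪ Set.Ico n (max n N0) :=
      (Set.Iio_union_Ico_eq_Iio (le_max_left n N0)).symm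
    rw [hsplit, Set.image_union, Submodule.span_union] at hNn
    obtain ⟨a, ha, cpt, hcpt, hac⟩ := Submodule.mem_sup.mp hNn
    have hcptU : cpt ∈ (f n).1.2 := by
      refine (Submodule.span_le.mpr ?_) hcpt
      rintro _ ⟨j, hj, rfl⟩
      exact hUmono n j hj.1 (hemem j)
    have ha0 : a = 0 := by
      refine Submodule.disjoint_def.mp (hdisjE n) a ha ?_
      have : a = g - cpt := by rw [← hac]; abel
      rw [this]; exact sub_mem hg hcptU
    have hgc : g = cpt := by rw [← hac, ha0, zero_add]
    rw [hgc]
    refine Submodule.span_mono (Set.image_mono (f := e) ?_) hcpt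
    intro j hj; exact hj.1
  have hopen_tail : ∀ n, IsOpen ((Submodule.span (ZMod 2) (e '' {k | n ≤ k}) : Submodule (ZMod 2) G) : Set G) :=
    fun n => Submodule.isOpen_mono (htail n) (f n).2.1
  -- closures and spans agree
  have hclos : ∀ s : Set G, (AddSubgroup.closure s : Set G)
      = ((Submodule.span (ZMod 2) s : Submodule (ZMod 2) G) : Set G) := by
    intro s
    apply Set.Subset.antisymm
    · exact fun y hy =>
        ((AddSubgroup.closure_le (Submodule.span (ZMod 2) s).toAddSubgroup).mpr
          Submodule.subset_span) hy
    · intro y hy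
      exact (Submodule.span_le.mpr AddSubgroup.subset_closure :
        Submodule.span (ZMod 2) s ≤ AddSubgroup.toZModSubmodule 2 (AddSubgroup.closure s)) hy
  refine ⟨e, ?_, ?_, ?_, ?_⟩
  · -- every element is a finite sum of basis elements
    intro g
    refine ⟨(b.repr g).support, ?_⟩
    have hsum : g = ∑ i ∈ (b.repr g).support, (b.repr g) i • b i := by
      conv_lhs => rw [← b.linearCombination_repr g]
      rw [Finsupp.linearCombination_apply, Finsupp.sum]
    calc g = ∑ i ∈ (b.repr g).support, (b.repr g) i • b i := hsum
      _ = ∑ i ∈ (b.repr g).support, e i := by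
        refine Finset.sum_congr rfl fun i hi => ?_
        have h1 : (b.repr g) i = 1 := (hK _).resolve_left (Finsupp.mem_support_iff.mp hi)
        rw [h1, one_smul, hbk i]
  · -- nonempty sums are nonzero
    intro s hs hsum
    have h1 : ∑ j ∈ s, (1 : ZMod 2) • e j = 0 := by
      simpa [one_smul] using hsum
    have := linearIndependent_iff'.mp hindep s (fun _ => 1) h1 hs.choose hs.choose_spec
    exact one_ne_zero this
  · -- tails are open
    intro n
    rw [hclos]
    exact hopen_tail n
  · -- the isomorphism
    let c : G →+ (ℕ →₀ ZMod 2) := (b.repr.toLinearMap).toAddMonoidHom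
    have hc : ∀ g, c g = b.repr g := fun _ => rfl
    have hck : ∀ k, c (e k) = Finsupp.single k 1 := by
      intro k
      rw [hc, ← hbk k, b.repr_self]
    refine ⟨c, b.repr.bijective, hck, ?_⟩
    have hker : ∀ k : ℕ, ∀ h ∈ Submodule.span (ZMod 2) (e '' {j | k+1 ≤ j}), (c h) k = 0 := by
      intro k h hh
      have hle : Submodule.span (ZMod 2) (e '' {j | k+1 ≤ j}) ≤
          LinearMap.ker ((Finsupp.lapply k : (ℕ →₀ ZMod 2) →ₗ[ZMod 2] ZMod 2)
            ∘ₗ (b.repr : G →ₗ[ZMod 2] (ℕ →₀ ZMod 2))) := by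
        rw [Submodule.span_le]
        rintro _ ⟨j, hj, rfl⟩
        simp only [SetLike.mem_coe, LinearMap.mem_ker, LinearMap.comp_apply,
          LinearEquiv.coe_coe, Finsupp.lapply_apply]
        rw [← hbk j, b.repr_self]
        exact Finsupp.single_eq_of_ne (by
          have hj' : k + 1 ≤ j := hj
          omega)
      have := hle hh
      simp only [LinearMap.mem_ker, LinearMap.comp_apply, LinearEquiv.coe_coe,
        Finsupp.lapply_apply] at this
      rw [hc]; exact this
    letI : TopologicalSpace (ZMod 2) := ⊥
    haveI : DiscreteTopology (ZMod 2) := ⟨rfl⟩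
    refine continuous_pi fun k => ?_
    rw [continuous_discrete_rng]
    intro v
    rw [isOpen_iff_forall_mem_open]
    intro g0 hg0
    refine ⟨(g0 + ·) '' (Submodule.span (ZMod 2) (e '' {j | k+1 ≤ j}) : Set G), ?_,
      (isOpenMap_add_left g0) _ (hopen_tail (k+1)), ⟨0, Submodule.zero_mem _, add_zero g0⟩⟩
    rintro _ ⟨h, hh, rfl⟩
    simp only [Set.mem_preimage, Set.mem_singleton_iff] at hg0 ⊢
    rw [map_add, Finsupp.add_apply, hker k h hh, add_zero, hg0]
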